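/- Lower bound of the exact sum by the computed Horner value for nonnegative data (Lemma 1, part (ii)): Let u be a real number with 0 ≤ u < 1, let n be a positive integer, let x ≥ 0 be a real number, and let a_0, …, a_n, b_0, …, b_n be nonnegative real numbers. Suppose r_0, …, r_n are real numbers such that r_n = (a_n + b_n)/(1+μ_n) and, for every i = n−1, …, 0, r_i = ( r_{i+1}·x/(1+ε_i) + (a_i + b_i)/(1+μ_i) ) / (1+δ_i), where all the perturbations ε_i, δ_i, μ_i have absolute value at most u. Then Σ_{i=0}^n (a_i + b_i) x^i ≤ (1+u)^{2n+1} · r_0. -/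

import Mathlib

/-- Lower bound of the exact sum by the computed Horner value for nonnegative
data (Lemma 1, part (ii)). -/
theorem horner_sum_lower_bound
    (u : ℝ) (hu0 : 0 ≤ u) (hu1 : u < 1) (n : ℕ) (hn : 1 ≤ n)
    (x : ℝ) (hx : 0 ≤ x) (a b r ε δ μ : ℕ → ℝ)
    (ha : ∀ i ≤ n, 0 ≤ a i) (hb : ∀ i ≤ n, 0 ≤ b i)
    (hμu : ∀ i ≤ n, |μ i| ≤ u)
    (hεu : ∀ i < n, |ε i| ≤ u) (hδu : ∀ i < n, |δ i| ≤ u)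
    (hrn : r n = (a n + b n) / (1 + μ n))
    (hrec : ∀ i < n,
      r i = (r (i + 1) * x / (1 + ε i) + (a i + b i) / (1 + μ i)) / (1 + δ i)) :
    ∑ i ∈ Finset.range (n + 1), (a i + b i) * x ^ i ≤
      (1 + u) ^ (2 * n + 1) * r 0 := by
  have hU : (0:ℝ) < 1 + u := by linarith
  have hpos : ∀ v : ℝ, |v| ≤ u → 0 < 1 + v := fun v hv => by
    have := abs_le.mp hv; linarith
  have hle : ∀ v : ℝ, |v| ≤ u → 1 + v ≤ 1 + u := fun v hv => by
    have := abs_le.mp hv; linarith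
  have hs : ∀ i ≤ n, 0 ≤ a i + b i := fun i hi => add_nonneg (ha i hi) (hb i hi)
  have hr : ∀ d ≤ n, 0 ≤ r (n - d) := by
    intro d
    induction d with
    | zero =>
      intro _
      simp only [Nat.sub_zero, hrn]
      exact div_nonneg (hs n le_rfl) (hpos _ (hμu n le_rfl)).le
    | succ d ih =>
      intro hd
      have hk : n - (d + 1) < n := by omega
      have hk1 : n - (d + 1) + 1 = n - d := by omega
      rw [hrec _ hk, hk1]
      have h1 := hpos _ (hεu _ hk)
      have h2 := hpos _ (hμu _ hk.le)
      have h3 := hpos _ (hδu _ hk)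
      have h4 := ih (by omega)
      exact div_nonneg (add_nonneg (div_nonneg (mul_nonneg h4 hx) h1.le)
        (div_nonneg (hs _ hk.le) h2.le)) h3.le
  have key : ∀ d ≤ n, ∑ i ∈ Finset.range (d + 1), (a (n - d + i) + b (n - d + i)) * x ^ i
      ≤ (1 + u) ^ (2 * d + 1) * r (n - d) := by
    intro d
    induction d with
    | zero =>
      intro _
      simp only [Nat.sub_zero, Finset.sum_range_one, Nat.add_zero, pow_zero, mul_one,
        Nat.mul_zero, Nat.zero_add, pow_one]
      have hm := hpos _ (hμu n le_rfl)
      have hrn' : a n + b n = (1 + μ n) * r n := by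
        rw [hrn]; field_simp
      have hr0 : 0 ≤ r n := by simpa using hr 0 (by omega)
      rw [hrn']
      exact mul_le_mul_of_nonneg_right (hle _ (hμu n le_rfl)) hr0
    | succ d ih =>
      intro hd
      have hk : n - (d + 1) < n := by omega
      have hk1 : n - (d + 1) + 1 = n - d := by omega
      set k := n - (d + 1) with hkdef
      have hε := hεu _ hk
      have hμ := hμu _ hk.le
      have hδ := hδu _ hk
      have he : 0 < 1 + ε k := hpos _ hε
      have hm : 0 < 1 + μ k := hpos _ hμ
      have hdd : 0 < 1 + δ k := hpos _ hδ
      have hrk1 : 0 ≤ r (k + 1) := by rw [hk1]; exact hr d (by omega)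
      have hrk : 0 ≤ r k := hr (d + 1) hd
      have hsk : 0 ≤ a k + b k := hs _ hk.le
      -- step inequality: x * r (k+1) + (a k + b k) ≤ (1+u)^2 * r k
      have hstep : x * r (k + 1) + (a k + b k) ≤ (1 + u) ^ 2 * r k := by
        have hN : r k * (1 + δ k)
            = r (k + 1) * x / (1 + ε k) + (a k + b k) / (1 + μ k) := by
          rw [hrec k hk]; field_simp
        have h1 : x * r (k + 1) ≤ (1 + u) * (r (k + 1) * x / (1 + ε k)) := by
          have hq : (1:ℝ) ≤ (1 + u) / (1 + ε k) := (one_le_div he).mpr (hle _ hε)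
          calc x * r (k + 1) = r (k + 1) * x * 1 := by ring
            _ ≤ r (k + 1) * x * ((1 + u) / (1 + ε k)) :=
                mul_le_mul_of_nonneg_left hq (mul_nonneg hrk1 hx)
            _ = (1 + u) * (r (k + 1) * x / (1 + ε k)) := by ring
        have h2 : a k + b k ≤ (1 + u) * ((a k + b k) / (1 + μ k)) := by
          have hq : (1:ℝ) ≤ (1 + u) / (1 + μ k) := (one_le_div hm).mpr (hle _ hμ)
          calc a k + b k = (a k + b k) * 1 := by ring
            _ ≤ (a k + b k) * ((1 + u) / (1 + μ k)) :=
                mul_le_mul_of_nonneg_left hq hsk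
            _ = (1 + u) * ((a k + b k) / (1 + μ k)) := by ring
        have h3 : (1 + u) * (r k * (1 + δ k)) ≤ (1 + u) * (r k * (1 + u)) :=
          mul_le_mul_of_nonneg_left (mul_le_mul_of_nonneg_left (hle _ hδ) hrk) hU.le
        calc x * r (k + 1) + (a k + b k)
            ≤ (1 + u) * (r (k + 1) * x / (1 + ε k))
              + (1 + u) * ((a k + b k) / (1 + μ k)) := add_le_add h1 h2
          _ = (1 + u) * (r k * (1 + δ k)) := by rw [hN]; ring
          _ ≤ (1 + u) * (r k * (1 + u)) := h3
          _ = (1 + u) ^ 2 * r k := by ring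
      have hC1 : (1:ℝ) ≤ (1 + u) ^ (2 * d + 1) := one_le_pow₀ (by linarith)
      have hC0 : (0:ℝ) ≤ (1 + u) ^ (2 * d + 1) := by linarith
      have hT : ∑ i ∈ Finset.range (d + 1), (a (k + 1 + i) + b (k + 1 + i)) * x ^ i
          ≤ (1 + u) ^ (2 * d + 1) * r (k + 1) := by
        rw [hk1]; exact ih (by omega)
      calc ∑ i ∈ Finset.range (d + 1 + 1), (a (k + i) + b (k + i)) * x ^ i
          = (∑ i ∈ Finset.range (d + 1), (a (k + 1 + i) + b (k + 1 + i)) * x ^ i) * x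
            + (a k + b k) := by
            rw [Finset.sum_range_succ', Finset.sum_mul]
            simp only [pow_succ, Nat.add_zero, pow_zero, mul_one]
            congr 1
            refine Finset.sum_congr rfl fun i _ => ?_
            have : k + (i + 1) = k + 1 + i := by omega
            rw [this]; ring
        _ ≤ (1 + u) ^ (2 * d + 1) * r (k + 1) * x + (a k + b k) := by
            have hts : 0 ≤ ∑ i ∈ Finset.range (d + 1),
                (a (k + 1 + i) + b (k + 1 + i)) * x ^ i := by
              refine Finset.sum_nonneg fun i hi => ?_
              refine mul_nonneg (hs _ ?_) (pow_nonneg hx i)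
              have := Finset.mem_range.mp hi
              omega
            exact add_le_add_left (mul_le_mul_of_nonneg_right hT hx) _
        _ ≤ (1 + u) ^ (2 * d + 1) * (x * r (k + 1) + (a k + b k)) := by
            have : a k + b k ≤ (1 + u) ^ (2 * d + 1) * (a k + b k) := by
              nlinarith
            nlinarith [mul_nonneg hrk1 hx]
        _ ≤ (1 + u) ^ (2 * d + 1) * ((1 + u) ^ 2 * r k) :=
            mul_le_mul_of_nonneg_left hstep hC0
        _ = (1 + u) ^ (2 * (d + 1) + 1) * r k := by ring
  have := key n le_rfl
  simpa using this
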